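/- Let m ≥ 1, let f be a Schwartz function on ℝ^m and ρ a Schwartz function on ℝ. Then for every a ∈ ℝ^m and ω ∈ ℝ, the Fourier transform in the bias variable of the ridgelet transform factorizes as ∫_ℝ R[f;ρ](a,b) e^{−iωb} db = f̂(ωa)·conj(ρ^♯(ω)), where f̂(ξ) := ∫_{ℝ^m} f(x) e^{−i x·ξ} dx and ρ^♯(ω) := ∫_ℝ ρ(b) e^{−iωb} db. -/

import Mathlib

open MeasureTheory Complex
open scoped RealInnerProductSpace

/-- Fourier transform in the bias variable: `φ^♯(ω) = ∫ φ(b) e^{-iωb} db`. -/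
noncomputable def biasFourier (φ : ℝ → ℂ) (ω : ℝ) : ℂ :=
  ∫ b : ℝ, φ b * Complex.exp (-Complex.I * ω * b)

/-- The ridgelet transform `R[f;ρ](a,b) = ∫ f(x) conj(ρ(a·x - b)) dx`. -/
noncomputable def ridgelet (m : ℕ) (f : EuclideanSpace ℝ (Fin m) → ℂ) (ρ : ℝ → ℂ)
    (a : EuclideanSpace ℝ (Fin m)) (b : ℝ) : ℂ :=
  ∫ x : EuclideanSpace ℝ (Fin m), f x * starRingEnd ℂ (ρ (⟪a, x⟫ - b))

theorem ridgelet_biasFourier_factorizes (m : ℕ) (hm : 1 ≤ m)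
    (f : SchwartzMap (EuclideanSpace ℝ (Fin m)) ℂ) (ρ : SchwartzMap ℝ ℂ)
    (a : EuclideanSpace ℝ (Fin m)) (ω : ℝ) :
    ∫ b : ℝ, ridgelet m f ρ a b * Complex.exp (-Complex.I * ω * b)
      = (∫ x : EuclideanSpace ℝ (Fin m),
            f x * Complex.exp (-Complex.I * ⟪x, ω • a⟫))
        * starRingEnd ℂ (biasFourier ρ ω) := by
  classical
  have hexp_norm : ∀ s : ℝ, ‖Complex.exp (-Complex.I * s)‖ = 1 := by
    intro s
    rw [Complex.norm_exp]
    have : (-Complex.I * s).re = 0 := by simp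
    rw [this, Real.exp_zero]
  -- the full integrand on the product space
  set G : EuclideanSpace ℝ (Fin m) → ℝ → ℂ := fun x b =>
    f x * starRingEnd ℂ (ρ (⟪a, x⟫ - b)) * Complex.exp (-Complex.I * ω * b) with hG
  have hρc : Continuous fun t : ℝ => starRingEnd ℂ (ρ t) :=
    Complex.continuous_conj.comp ρ.continuous
  have hGcont : Continuous (Function.uncurry G) := by
    apply Continuous.mul
    · apply Continuous.mul
      · exact f.continuous.comp continuous_fst
      · exact hρc.comp ((continuous_const.inner continuous_fst).sub continuous_snd)
    · exact Complex.continuous_exp.comp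
        (continuous_const.mul (Complex.continuous_ofReal.comp continuous_snd))
  have hρint : Integrable (fun t : ℝ => starRingEnd ℂ (ρ t)) := by
    refine (ρ.integrable (μ := volume)).norm.mono' hρc.aestronglyMeasurable ?_
    filter_upwards with t
    simp [RCLike.norm_conj]
  have hbint : ∀ x : EuclideanSpace ℝ (Fin m), Integrable (fun b : ℝ =>
      starRingEnd ℂ (ρ (⟪a, x⟫ - b)) * Complex.exp (-Complex.I * ω * b)) := by
    intro x
    have h1 : Integrable (fun b : ℝ => starRingEnd ℂ (ρ (⟪a, x⟫ - b))) :=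
      hρint.comp_sub_left _
    refine h1.norm.mono' ?_ ?_
    · exact (hρc.comp (continuous_const.sub continuous_id)).aestronglyMeasurable.mul
        (Complex.continuous_exp.comp
          (continuous_const.mul Complex.continuous_ofReal)).aestronglyMeasurable
    · filter_upwards with b
      rw [norm_mul]
      have h1 : ‖Complex.exp (-Complex.I * ω * b)‖ = 1 := by
        rw [mul_assoc, ← Complex.ofReal_mul]; exact hexp_norm _
      rw [h1, mul_one]
  -- product integrability
  have hint : Integrable (Function.uncurry G)
      ((volume : Measure (EuclideanSpace ℝ (Fin m))).prod (volume : Measure ℝ)) := by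
    rw [integrable_prod_iff hGcont.aestronglyMeasurable]
    constructor
    · exact Filter.Eventually.of_forall fun x => by
        simpa [hG, mul_assoc] using ((hbint x).const_mul (f x))
    · have hnormeq : ∀ x : EuclideanSpace ℝ (Fin m), (∫ b : ℝ, ‖G x b‖) =
          ‖f x‖ * ∫ t : ℝ, ‖ρ t‖ := by
        intro x
        have hnorm : ∀ b : ℝ, ‖G x b‖ = ‖f x‖ * ‖ρ (⟪a, x⟫ - b)‖ := by
          intro b
          simp only [hG, norm_mul]
          have h1 : ‖Complex.exp (-Complex.I * ω * b)‖ = 1 := by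
            rw [mul_assoc, ← Complex.ofReal_mul]; exact hexp_norm _
          rw [h1, mul_one, RCLike.norm_conj]
        simp_rw [hnorm]
        rw [integral_const_mul]
        congr 1
        exact integral_sub_left_eq_self (fun t => ‖ρ t‖) volume (⟪a, x⟫)
      have : (fun x : EuclideanSpace ℝ (Fin m) => ∫ b : ℝ, ‖Function.uncurry G (x, b)‖)
          = fun x => ‖f x‖ * ∫ t : ℝ, ‖ρ t‖ := funext fun x => hnormeq x
      rw [this]
      exact (f.integrable (μ := volume)).norm.mul_const _
  -- rewrite LHS as a double integral and swap
  have lhs_eq : (∫ b : ℝ, ridgelet m f ρ a b * Complex.exp (-Complex.I * ω * b))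
      = ∫ b : ℝ, ∫ x : EuclideanSpace ℝ (Fin m), G x b := by
    congr 1; ext b
    rw [ridgelet, ← integral_mul_const]
  rw [lhs_eq, ← integral_integral_swap hint]
  -- compute inner integral in b for fixed x
  have inner_eq : ∀ x : EuclideanSpace ℝ (Fin m), (∫ b : ℝ, G x b)
      = f x * Complex.exp (-Complex.I * ⟪x, ω • a⟫) *
        ∫ t : ℝ, starRingEnd ℂ (ρ t) * Complex.exp (Complex.I * ω * t) := by
    intro x
    set c : ℝ := ⟪a, x⟫ with hc
    have key : (∫ b : ℝ, starRingEnd ℂ (ρ (c - b)) * Complex.exp (-Complex.I * ω * b))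
        = Complex.exp (-Complex.I * ω * c) *
          ∫ t : ℝ, starRingEnd ℂ (ρ t) * Complex.exp (Complex.I * ω * t) := by
      have h := integral_sub_left_eq_self
        (fun t : ℝ => starRingEnd ℂ (ρ t) * Complex.exp (Complex.I * ω * t) *
          Complex.exp (-Complex.I * ω * c)) volume c
      have hexp : ∀ b : ℝ, Complex.exp (-Complex.I * ω * b)
          = Complex.exp (Complex.I * ω * ((c - b : ℝ) : ℂ)) *
            Complex.exp (-Complex.I * ω * c) := by
        intro b
        rw [← Complex.exp_add]
        congr 1
        push_cast
        ring
      have heq : ∀ b : ℝ, starRingEnd ℂ (ρ (c - b)) * Complex.exp (-Complex.I * ω * b)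
          = starRingEnd ℂ (ρ (c - b)) * Complex.exp (Complex.I * ω * ((c - b : ℝ) : ℂ)) *
            Complex.exp (-Complex.I * ω * c) := by
        intro b
        rw [hexp b, ← mul_assoc]
      simp_rw [heq]
      rw [h, integral_mul_const, mul_comm]
    calc (∫ b : ℝ, G x b)
        = f x * ∫ b : ℝ, starRingEnd ℂ (ρ (c - b)) * Complex.exp (-Complex.I * ω * b) := by
          simp_rw [hG, mul_assoc]; rw [integral_const_mul]
      _ = f x * (Complex.exp (-Complex.I * ω * c) *
            ∫ t : ℝ, starRingEnd ℂ (ρ t) * Complex.exp (Complex.I * ω * t)) := by rw [key]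
      _ = f x * Complex.exp (-Complex.I * ⟪x, ω • a⟫) *
            ∫ t : ℝ, starRingEnd ℂ (ρ t) * Complex.exp (Complex.I * ω * t) := by
          have h2 : (⟪x, ω • a⟫ : ℝ) = ω * c := by
            rw [real_inner_smul_right, real_inner_comm, hc]
          have hE : Complex.exp (-Complex.I * ω * c)
              = Complex.exp (-Complex.I * ⟪x, ω • a⟫) := by
            rw [h2]
            congr 1
            push_cast
            ring
          rw [hE, mul_assoc]
  simp_rw [inner_eq]
  rw [integral_mul_const]
  congr 1
  -- conj of biasFourier
  rw [biasFourier, ← integral_conj]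
  congr 1; ext t
  rw [map_mul, ← Complex.exp_conj]
  congr 2
  simp [Complex.ext_iff]
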